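/- For every vertex v of the set-graph G_{A^(n)} with n ≥ 2, the degree of v satisfies 2^(n−1) − 1 ≤ deg(v) ≤ 2^n − 2. -/

import Mathlib

/-- The set-graph `G_{A^(n)}`: vertices are the nonempty subsets of an `n`-element set,
two distinct vertices being adjacent iff the corresponding subsets intersect. -/
def setGraph (n : ℕ) : SimpleGraph {S : Finset (Fin n) // S.Nonempty} where
  Adj S T := S ≠ T ∧ (S.1 ∩ T.1).Nonempty
  symm := ⟨fun S T h => ⟨h.1.symm, by
    obtain ⟨_, h2⟩ := h
    rwa [Finset.inter_comm]⟩⟩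
  loopless := ⟨fun S h => h.1 rfl⟩

instance (n : ℕ) : DecidableRel (setGraph n).Adj := fun S T =>
  inferInstanceAs (Decidable (S ≠ T ∧ (S.1 ∩ T.1).Nonempty))

lemma card_filter_mem_aux (n : ℕ) (a : Fin n) :
    (Finset.univ.filter (fun S : Finset (Fin n) => a ∈ S)).card = 2 ^ (n - 1) := by
  have himg : Finset.univ.filter (fun S : Finset (Fin n) => a ∈ S)
      = ((Finset.univ.erase a).powerset).image (insert a) := by
    ext S
    simp only [Finset.mem_filter, Finset.mem_univ, true_and, Finset.mem_image,
      Finset.mem_powerset]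
    constructor
    · intro hS
      refine ⟨S.erase a, ?_, ?_⟩
      · intro x hx
        simp only [Finset.mem_erase] at hx ⊢
        exact ⟨hx.1, Finset.mem_univ _⟩
      · rw [Finset.insert_erase hS]
    · rintro ⟨s, _, rfl⟩
      exact Finset.mem_insert_self a s
  rw [himg, Finset.card_image_of_injOn, Finset.card_powerset, Finset.card_erase_of_mem
    (Finset.mem_univ a), Finset.card_univ, Fintype.card_fin]
  intro s hs t ht hst
  simp only [Finset.mem_coe, Finset.mem_powerset] at hs ht
  have has : a ∉ s := fun h => (Finset.mem_erase.mp (hs h)).1 rfl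
  have hat : a ∉ t := fun h => (Finset.mem_erase.mp (ht h)).1 rfl
  have := congrArg (Finset.erase · a) hst
  simpa [Finset.erase_insert has, Finset.erase_insert hat] using this

lemma card_vertices (n : ℕ) :
    Fintype.card {S : Finset (Fin n) // S.Nonempty} = 2 ^ n - 1 := by
  have : Fintype.card {S : Finset (Fin n) // ¬ S = ∅} = 2 ^ n - 1 := by
    rw [Fintype.card_subtype_compl]
    simp [Fintype.card_subtype_eq (∅ : Finset (Fin n))]
  rw [← this]
  exact Fintype.card_congr (Equiv.subtypeEquivRight (fun S => by
    simp [Finset.nonempty_iff_ne_empty]))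

theorem stmt_0 (n : ℕ) (hn : 2 ≤ n) (v : {S : Finset (Fin n) // S.Nonempty}) :
    2 ^ (n - 1) - 1 ≤ (setGraph n).degree v ∧ (setGraph n).degree v ≤ 2 ^ n - 2 := by
  constructor
  · obtain ⟨a, ha⟩ := v.2
    set F : Finset {S : Finset (Fin n) // S.Nonempty} :=
      Finset.univ.filter (fun T => a ∈ T.1 ∧ T ≠ v) with hF
    have hsub : F ⊆ (setGraph n).neighborFinset v := by
      intro T hT
      simp only [hF, Finset.mem_filter, Finset.mem_univ, true_and] at hT
      rw [SimpleGraph.mem_neighborFinset]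
      exact ⟨fun h => hT.2 h.symm, ⟨a, Finset.mem_inter.mpr ⟨ha, hT.1⟩⟩⟩
    have himg : F.image Subtype.val
        = (Finset.univ.filter (fun S : Finset (Fin n) => a ∈ S)).erase v.1 := by
      ext S
      simp only [Finset.mem_image, hF, Finset.mem_filter, Finset.mem_univ, true_and,
        Finset.mem_erase]
      constructor
      · rintro ⟨T, ⟨haT, hTv⟩, rfl⟩
        exact ⟨fun h => hTv (Subtype.ext h), haT⟩
      · rintro ⟨hSv, haS⟩
        exact ⟨⟨S, ⟨a, haS⟩⟩, ⟨haS, fun h => hSv (congrArg Subtype.val h)⟩, rfl⟩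
    have hcard : F.card = 2 ^ (n - 1) - 1 := by
      rw [← Finset.card_image_of_injective F Subtype.val_injective, himg,
        Finset.card_erase_of_mem (by simp [ha]), card_filter_mem_aux]
    calc 2 ^ (n - 1) - 1 = F.card := hcard.symm
      _ ≤ ((setGraph n).neighborFinset v).card := Finset.card_le_card hsub
      _ = (setGraph n).degree v := rfl
  · have h := (setGraph n).degree_lt_card_verts v
    rw [card_vertices] at h
    omega
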